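/- Let q, p : ℝ → ℝ³ be smooth curves with p(t) · q(t) = 1 and p'(t) = q(t) × q'(t) for all t, and suppose I := det(q, q', q'') and Ī := det(p, p', p'') are nowhere zero. Setting J := det(q', q'', q''') and J̄ := det(p', p'', p'''), one has I² + J = 0 and Ī² − J̄ = 0 identically. -/

import Mathlib

open Matrix

/-- Scalar triple product on ℝ³. -/
def det3 (u v w : Fin 3 → ℝ) : ℝ := u ⬝ᵥ (v ⨯₃ w)

private lemma hasDerivAt_dot3 {f g : ℝ → Fin 3 → ℝ} {f' g' : Fin 3 → ℝ} {t : ℝ}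
    (hf : HasDerivAt f f' t) (hg : HasDerivAt g g' t) :
    HasDerivAt (fun s => f s ⬝ᵥ g s) (f' ⬝ᵥ g t + f t ⬝ᵥ g') t := by
  have hfi := hasDerivAt_pi.mp hf
  have hgi := hasDerivAt_pi.mp hg
  have h := ((hfi 0).mul (hgi 0)).add (((hfi 1).mul (hgi 1)).add ((hfi 2).mul (hgi 2)))
  have hfun : (fun s => f s ⬝ᵥ g s)
      = fun s => f s 0 * g s 0 + (f s 1 * g s 1 + f s 2 * g s 2) := by
    funext s; simp [dotProduct, Fin.sum_univ_three, add_assoc]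
  rw [hfun]
  refine h.congr_deriv ?_
  simp [dotProduct, Fin.sum_univ_three]; ring

private lemma hasDerivAt_cross3 {f g : ℝ → Fin 3 → ℝ} {f' g' : Fin 3 → ℝ} {t : ℝ}
    (hf : HasDerivAt f f' t) (hg : HasDerivAt g g' t) :
    HasDerivAt (fun s => f s ⨯₃ g s) (f' ⨯₃ g t + f t ⨯₃ g') t := by
  have hfi := hasDerivAt_pi.mp hf
  have hgi := hasDerivAt_pi.mp hg
  rw [hasDerivAt_pi]
  intro i
  fin_cases i
  · have h := ((hfi 1).mul (hgi 2)).sub ((hfi 2).mul (hgi 1))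
    have hfun : (fun s => (f s ⨯₃ g s) 0) = fun s => f s 1 * g s 2 - f s 2 * g s 1 := by
      funext s; simp [cross_apply]
    rw [show (Fin.mk 0 (by norm_num) : Fin 3) = 0 from rfl, hfun]
    refine h.congr_deriv ?_
    simp [cross_apply]; ring
  · have h := ((hfi 2).mul (hgi 0)).sub ((hfi 0).mul (hgi 2))
    have hfun : (fun s => (f s ⨯₃ g s) 1) = fun s => f s 2 * g s 0 - f s 0 * g s 2 := by
      funext s; simp [cross_apply]
    rw [show (Fin.mk 1 (by norm_num) : Fin 3) = 1 from rfl, hfun]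
    refine h.congr_deriv ?_
    simp [cross_apply]; ring
  · have h := ((hfi 0).mul (hgi 1)).sub ((hfi 1).mul (hgi 0))
    have hfun : (fun s => (f s ⨯₃ g s) 2) = fun s => f s 0 * g s 1 - f s 1 * g s 0 := by
      funext s; simp [cross_apply]
    rw [show (Fin.mk 2 (by norm_num) : Fin 3) = 2 from rfl, hfun]
    refine h.congr_deriv ?_
    simp [cross_apply]; ring

private lemma cross_dot_left (a b : Fin 3 → ℝ) : (a ⨯₃ b) ⬝ᵥ a = 0 := by
  simp [cross_apply, dotProduct, Fin.sum_univ_three]; ring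

private lemma cross_dot_right (a b : Fin 3 → ℝ) : (a ⨯₃ b) ⬝ᵥ b = 0 := by
  simp [cross_apply, dotProduct, Fin.sum_univ_three]; ring

private lemma cross_dot_cyc (a b c : Fin 3 → ℝ) : (a ⨯₃ b) ⬝ᵥ c = det3 a b c := by
  simp [det3, cross_apply, dotProduct, Fin.sum_univ_three]; ring

private lemma triple_expansion (a b c d : Fin 3 → ℝ) :
    det3 a b c • d = (d ⬝ᵥ a) • (b ⨯₃ c) + (d ⬝ᵥ b) • (c ⨯₃ a) + (d ⬝ᵥ c) • (a ⨯₃ b) := by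
  funext i
  fin_cases i <;>
    · simp [det3, cross_apply, dotProduct, Fin.sum_univ_three]; ring

private lemma cross_cross_same (a b c : Fin 3 → ℝ) :
    (a ⨯₃ b) ⨯₃ (a ⨯₃ c) = det3 a b c • a := by
  funext i
  fin_cases i <;>
    · simp [det3, cross_apply, dotProduct, Fin.sum_univ_three]; ring

private lemma det3_self (a b : Fin 3 → ℝ) : det3 a a b = 0 := by
  simp [det3, cross_apply, dotProduct, Fin.sum_univ_three]; ring

/-- Along integral curves of the Cartan–Engel system `p ⬝ᵥ q = 1`, `p' = q × q'`:
`I² + J = 0` and `Ī² − J̄ = 0` (constant centro-affine torsion −1). -/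
theorem centroaffine_torsion_identity (q p : ℝ → Fin 3 → ℝ)
    (hq : ContDiff ℝ (⊤ : ℕ∞) q) (hp : ContDiff ℝ (⊤ : ℕ∞) p)
    (hpq : ∀ t, p t ⬝ᵥ q t = 1)
    (hode : ∀ t, deriv p t = q t ⨯₃ deriv q t)
    (hI : ∀ t, det3 (q t) (deriv q t) (deriv (deriv q) t) ≠ 0)
    (hIbar : ∀ t, det3 (p t) (deriv p t) (deriv (deriv p) t) ≠ 0) :
    ∀ t, (det3 (q t) (deriv q t) (deriv (deriv q) t)) ^ 2
        + det3 (deriv q t) (deriv (deriv q) t) (deriv (deriv (deriv q)) t) = 0 ∧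
      (det3 (p t) (deriv p t) (deriv (deriv p) t)) ^ 2
        - det3 (deriv p t) (deriv (deriv p) t) (deriv (deriv (deriv p)) t) = 0 := by
  have hq1 : ContDiff ℝ (⊤ : ℕ∞) (deriv q) := (contDiff_infty_iff_deriv.mp hq).2
  have hq2 : ContDiff ℝ (⊤ : ℕ∞) (deriv (deriv q)) := (contDiff_infty_iff_deriv.mp hq1).2
  set q1 := deriv q with hq1def
  set q2 := deriv q1 with hq2def
  set q3 := deriv q2 with hq3def
  have Hq : ∀ s, HasDerivAt q (q1 s) s := fun s => ((hq.differentiable (by simp)) s).hasDerivAt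
  have Hq1 : ∀ s, HasDerivAt q1 (q2 s) s := fun s => ((hq1.differentiable (by simp)) s).hasDerivAt
  have Hq2 : ∀ s, HasDerivAt q2 (q3 s) s := fun s => ((hq2.differentiable (by simp)) s).hasDerivAt
  have Hp : ∀ s, HasDerivAt p (q s ⨯₃ q1 s) s := fun s => by
    have h := ((hp.differentiable (by simp)) s).hasDerivAt
    rwa [hode s] at h
  have hp1 : deriv p = fun s => q s ⨯₃ q1 s := funext hode
  -- p ⬝ q1 = 0
  have e1 : ∀ s, p s ⬝ᵥ q1 s = 0 := by
    intro s
    have h := hasDerivAt_dot3 (Hp s) (Hq s)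
    rw [show (fun s => p s ⬝ᵥ q s) = fun _ => (1 : ℝ) from funext hpq] at h
    have h0 := h.unique (hasDerivAt_const s 1)
    have := cross_dot_left (q s) (q1 s)
    -- (q×q1)⬝q + p⬝q1 = 0
    nlinarith [h0, this]
  -- p ⬝ q2 = 0
  have e2 : ∀ s, p s ⬝ᵥ q2 s = 0 := by
    intro s
    have h := hasDerivAt_dot3 (Hp s) (Hq1 s)
    rw [show (fun s => p s ⬝ᵥ q1 s) = fun _ => (0 : ℝ) from funext e1] at h
    have h0 := h.unique (hasDerivAt_const s 0)
    have := cross_dot_right (q s) (q1 s)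
    nlinarith [h0, this]
  -- p ⬝ q3 = -I
  have e3 : ∀ s, p s ⬝ᵥ q3 s = - det3 (q s) (q1 s) (q2 s) := by
    intro s
    have h := hasDerivAt_dot3 (Hp s) (Hq2 s)
    rw [show (fun s => p s ⬝ᵥ q2 s) = fun _ => (0 : ℝ) from funext e2] at h
    have h0 := h.unique (hasDerivAt_const s 0)
    have := cross_dot_cyc (q s) (q1 s) (q2 s)
    nlinarith [h0, this]
  -- q1 × q2 = I • p
  have ecross : ∀ s, q1 s ⨯₃ q2 s = det3 (q s) (q1 s) (q2 s) • p s := by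
    intro s
    have h := triple_expansion (q s) (q1 s) (q2 s) (p s)
    rw [hpq s, e1 s, e2 s] at h
    simpa using h.symm
  -- second derivative of p
  have Hp2 : ∀ s, HasDerivAt (deriv p) (q s ⨯₃ q2 s) s := by
    intro s
    have h := hasDerivAt_cross3 (Hq s) (Hq1 s)
    rw [← hp1] at h
    simpa [cross_self] using h
  have hp2 : deriv (deriv p) = fun s => q s ⨯₃ q2 s := funext fun s => (Hp2 s).deriv
  have Hp3 : ∀ s, HasDerivAt (deriv (deriv p)) (q1 s ⨯₃ q2 s + q s ⨯₃ q3 s) s := by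
    intro s
    have h := hasDerivAt_cross3 (Hq s) (Hq2 s)
    rwa [← hp2] at h
  have hp3 : ∀ s, deriv (deriv (deriv p)) s = q1 s ⨯₃ q2 s + q s ⨯₃ q3 s :=
    fun s => (Hp3 s).deriv
  intro t
  set I := det3 (q t) (q1 t) (q2 t) with hIdef
  constructor
  · -- I^2 + J = 0
    have hJ : det3 (q1 t) (q2 t) (q3 t) = I * (p t ⬝ᵥ q3 t) := by
      rw [← cross_dot_cyc, ecross t, smul_dotProduct, smul_eq_mul]
    rw [hJ, e3 t]
    ring
  · -- Ibar^2 - Jbar = 0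
    have hcc : deriv p t ⨯₃ deriv (deriv p) t = I • q t := by
      rw [hode t, hp2]
      exact cross_cross_same (q t) (q1 t) (q2 t)
    have hIbar' : det3 (p t) (deriv p t) (deriv (deriv p) t) = I := by
      rw [det3, hcc, dotProduct_smul, smul_eq_mul, hpq t, mul_one]
    have hJbar : det3 (deriv p t) (deriv (deriv p) t) (deriv (deriv (deriv p)) t)
        = I * I := by
      rw [← cross_dot_cyc, hcc, hp3 t, smul_dotProduct, smul_eq_mul, dotProduct_add,
        show q t ⬝ᵥ (q t ⨯₃ q3 t) = det3 (q t) (q t) (q3 t) from rfl, det3_self,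
        show q t ⬝ᵥ (q1 t ⨯₃ q2 t) = I from rfl, add_zero]
    rw [hIbar', hJbar]
    ring
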